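/- Let X be a one-sided shift space over a finite alphabet 𝔞. For all words u, v ∈ 𝔞^* the following identities of functions on X hold pointwise: (i) if v = v₁⋯v_n with n ≥ 1, then L(1_{C(u,v)}) = (∑_{a∈𝔞} (L(1_{C(a)}))²) · 1_{C(v₁,ε)} · 1_{C(u, v₂⋯v_n)} (where v₂⋯v_n = ε when n = 1); (ii) L(1_{C(u,ε)}) = (∑_{a∈𝔞} (L(1_{C(a)}))²) · (∑_{a∈𝔞} 1_{C(ua,ε)}), where ua denotes the word u followed by the letter a. -/

import Mathlib

open scoped Classical

/-- The one-sided shift map on `ℕ → A`. -/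
def shiftMap {A : Type*} (x : ℕ → A) : ℕ → A := fun i => x (i + 1)

/-- The point `ux` obtained by prepending the word `u` to `x`. -/
def prepend {A : Type*} (u : List A) (x : ℕ → A) : ℕ → A :=
  fun i => if h : i < u.length then u.get ⟨i, h⟩ else x (i - u.length)

/-- The cylinder set `C(u) = {x ∈ X : x₁⋯x_{|u|} = u}` of a word `u`. -/
def Cyl {A : Type*} (X : Set (ℕ → A)) (u : List A) : Set (ℕ → A) :=
  {x | x ∈ X ∧ ∀ (i : ℕ) (h : i < u.length), x i = u.get ⟨i, h⟩}

/-- The set `C(u,v) = {vx ∈ X : ux ∈ X}`. -/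
def CylUV {A : Type*} (X : Set (ℕ → A)) (u v : List A) : Set (ℕ → A) :=
  {z | z ∈ X ∧ ∃ x : ℕ → A, z = prepend v x ∧ prepend u x ∈ X}

/-- The transfer operator of a one-sided shift space `X`:
`(L f)(x) = (1/#σ⁻¹{x}) ∑_{y ∈ σ⁻¹{x}} f(y)` if `x ∈ σ(X)`, and `0` otherwise. -/
noncomputable def transferL {A : Type*} (X : Set (ℕ → A)) (f : (ℕ → A) → ℂ)
    (x : ℕ → A) : ℂ :=
  if ({y | y ∈ X ∧ shiftMap y = x}).Nonempty then
    (({y | y ∈ X ∧ shiftMap y = x}).ncard : ℂ)⁻¹ *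
      ∑ᶠ y ∈ {y | y ∈ X ∧ shiftMap y = x}, f y
  else 0

section helper
variable {A : Type*}

variable {A : Type*}

lemma prepend_nil (x : ℕ → A) : prepend ([] : List A) x = x := by
  funext i; simp [prepend]

lemma prepend_cons_succ (a : A) (u : List A) (x : ℕ → A) (i : ℕ) :
    prepend (a :: u) x (i + 1) = prepend u x i := by
  simp only [prepend, List.length_cons, List.get_eq_getElem]
  by_cases h : i < u.length
  · rw [dif_pos (by omega), dif_pos h]
    simp
  · rw [dif_neg (by omega), dif_neg h]
    congr 1; omega

lemma prepend_cons_zero (a : A) (u : List A) (x : ℕ → A) :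
    prepend (a :: u) x 0 = a := by
  simp [prepend]

lemma shiftMap_prepend_cons (a : A) (u : List A) (x : ℕ → A) :
    shiftMap (prepend (a :: u) x) = prepend u x := by
  funext i; exact prepend_cons_succ a u x i

lemma shiftMap_prepend_single (a : A) (x : ℕ → A) :
    shiftMap (prepend [a] x) = x := by
  rw [shiftMap_prepend_cons, prepend_nil]

lemma prepend_append (u v : List A) (x : ℕ → A) :
    prepend (u ++ v) x = prepend u (prepend v x) := by
  induction u with
  | nil => simp [prepend_nil]
  | cons a u ih =>
    funext i
    cases i with
    | zero => rw [List.cons_append, prepend_cons_zero, prepend_cons_zero]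
    | succ n =>
      rw [List.cons_append, prepend_cons_succ, prepend_cons_succ, ih]

lemma eq_prepend_of_shift {y x : ℕ → A} (h : shiftMap y = x) : y = prepend [y 0] x := by
  funext i
  cases i with
  | zero => rw [prepend_cons_zero]
  | succ n => rw [prepend_cons_succ, prepend_nil, ← h]; rfl

lemma prepend_single_inj {a b : A} {x z : ℕ → A} :
    prepend [a] x = prepend [b] z ↔ a = b ∧ x = z := by
  constructor
  · intro h
    refine ⟨?_, ?_⟩
    · have := congrFun h 0
      simpa [prepend_cons_zero] using this
    · have := congrArg shiftMap h
      rwa [shiftMap_prepend_single, shiftMap_prepend_single] at this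
  · rintro ⟨rfl, rfl⟩; rfl

lemma mem_CylUV_nil {X : Set (ℕ → A)} {u : List A} {z : ℕ → A} :
    z ∈ CylUV X u [] ↔ z ∈ X ∧ prepend u z ∈ X := by
  simp [CylUV, prepend_nil]

lemma mem_of_prepend_mem {X : Set (ℕ → A)} (hXinv : ∀ x ∈ X, shiftMap x ∈ X)
    (u : List A) : ∀ y, prepend u y ∈ X → y ∈ X := by
  induction u with
  | nil => intro y h; rwa [prepend_nil] at h
  | cons a u ih =>
    intro y h
    apply ih
    have := hXinv _ h
    rwa [shiftMap_prepend_cons] at this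

lemma transferL_eq [Fintype A] (X : Set (ℕ → A)) (f : (ℕ → A) → ℂ) (x : ℕ → A) :
    transferL X f x =
      (((Finset.univ.filter fun a : A => prepend [a] x ∈ X).card : ℂ))⁻¹ *
        ∑ a ∈ Finset.univ.filter (fun a : A => prepend [a] x ∈ X), f (prepend [a] x) := by
  classical
  set S := Finset.univ.filter fun a : A => prepend [a] x ∈ X with hS
  have hinj : Set.InjOn (fun a : A => prepend [a] x) ↑S := by
    intro a _ b _ h
    exact (prepend_single_inj.1 h).1
  have hset : {y | y ∈ X ∧ shiftMap y = x} = (fun a : A => prepend [a] x) '' ↑S := by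
    ext y
    constructor
    · rintro ⟨hyX, hyx⟩
      refine ⟨y 0, ?_, (eq_prepend_of_shift hyx).symm⟩
      simp only [hS, Finset.coe_filter, Finset.mem_univ, true_and, Set.mem_setOf_eq]
      rwa [← eq_prepend_of_shift hyx]
    · rintro ⟨a, ha, rfl⟩
      simp only [hS, Finset.coe_filter, Finset.mem_univ, true_and, Set.mem_setOf_eq] at ha
      exact ⟨ha, shiftMap_prepend_single a x⟩
  rw [transferL, hset]
  by_cases hne : S.Nonempty
  · rw [if_pos (by exact (Set.image_nonempty).2 (Finset.coe_nonempty.2 hne))]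
    rw [Set.ncard_image_of_injOn hinj, Set.ncard_coe_finset,
      finsum_mem_image hinj, finsum_mem_coe_finset]
  · rw [if_neg (by rw [Set.image_nonempty]; exact fun h => hne (Finset.coe_nonempty.1 h))]
    rw [Finset.not_nonempty_iff_eq_empty.1 hne]
    simp

end helper

/-- the identities
(i) `L(1_{C(u,v)}) = (∑_a (L(1_{C(a)}))²)·1_{C(v₁,ε)}·1_{C(u,v₂⋯v_n)}` for `v ≠ ε`, and
(ii) `L(1_{C(u,ε)}) = (∑_a (L(1_{C(a)}))²)·(∑_a 1_{C(ua,ε)})`, pointwise on `X`. -/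
theorem transferL_indicator_formulas {A : Type*} [Fintype A] [Nonempty A]
    [TopologicalSpace A] [DiscreteTopology A]
    (X : Set (ℕ → A)) (hXclosed : IsClosed X) (hXinv : ∀ x ∈ X, shiftMap x ∈ X) :
    ∀ u v : List A, ∀ x ∈ X,
      (∀ hv : v ≠ [],
        transferL X (Set.indicator (CylUV X u v) fun _ => (1 : ℂ)) x =
          (∑ a : A, (transferL X (Set.indicator (Cyl X [a]) fun _ => (1 : ℂ)) x) ^ 2) *
            (Set.indicator (CylUV X [v.head hv] []) (fun _ => (1 : ℂ)) x *
              Set.indicator (CylUV X u v.tail) (fun _ => (1 : ℂ)) x)) ∧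
      (transferL X (Set.indicator (CylUV X u []) fun _ => (1 : ℂ)) x =
        (∑ a : A, (transferL X (Set.indicator (Cyl X [a]) fun _ => (1 : ℂ)) x) ^ 2) *
          ∑ a : A, Set.indicator (CylUV X (u ++ [a]) []) (fun _ => (1 : ℂ)) x) := by
  intro u v x hx
  classical
  set S := Finset.univ.filter (fun a : A => prepend [a] x ∈ X) with hSdef
  have hmemS : ∀ a : A, a ∈ S ↔ prepend [a] x ∈ X := by intro a; simp [hSdef]
  have hterm : ∀ a₀ : A, transferL X (Set.indicator (Cyl X [a₀]) fun _ => (1 : ℂ)) x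
      = ((S.card : ℂ))⁻¹ * (if a₀ ∈ S then 1 else 0) := by
    intro a₀
    rw [transferL_eq, ← hSdef]
    congr 1
    have hstep0 : ∀ a ∈ S, Set.indicator (Cyl X [a₀]) (fun _ => (1 : ℂ)) (prepend [a] x)
        = if a = a₀ then 1 else 0 := ?_
    · rw [Finset.sum_congr rfl hstep0, Finset.sum_ite_eq' S a₀ (fun _ => (1 : ℂ))]
    intro a ha
    rw [Set.indicator_apply]
    by_cases hq : a = a₀
    · subst hq
      rw [if_pos rfl, if_pos]
      refine ⟨(hmemS a).1 ha, ?_⟩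
      intro i hi
      simp only [List.length_singleton] at hi
      interval_cases i
      simp [prepend_cons_zero]
    · rw [if_neg hq, if_neg]
      intro hc
      refine hq ?_
      have := hc.2 0 (by norm_num)
      simpa [prepend_cons_zero] using this
  have hNinv : (∑ a : A, (transferL X (Set.indicator (Cyl X [a]) fun _ => (1 : ℂ)) x) ^ 2)
      = ((S.card : ℂ))⁻¹ := by
    simp only [hterm]
    have h1 : ∀ a : A, (((S.card : ℂ))⁻¹ * (if a ∈ S then 1 else 0)) ^ 2
        = ((S.card : ℂ))⁻¹ ^ 2 * (if a ∈ S then 1 else 0) := by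
      intro a; by_cases h : a ∈ S <;> simp [h, mul_pow]
    simp only [h1]
    rw [← Finset.mul_sum, Finset.sum_ite_mem, Finset.univ_inter, Finset.sum_const,
      nsmul_eq_mul, mul_one]
    rcases eq_or_ne ((S.card : ℂ)) 0 with h | h
    · simp [h]
    · field_simp
  constructor
  · intro hv
    obtain ⟨b, w, rfl⟩ : ∃ b w, v = b :: w := ⟨v.head hv, v.tail, (List.cons_head_tail hv).symm⟩
    rw [transferL_eq, ← hSdef, hNinv]
    simp only [List.head_cons, List.tail_cons]
    congr 1
    have hstep : ∀ a ∈ S, Set.indicator (CylUV X u (b :: w)) (fun _ => (1 : ℂ)) (prepend [a] x)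
        = if a = b ∧ (∃ x' : ℕ → A, x = prepend w x' ∧ prepend u x' ∈ X) then 1 else 0 := by
      intro a ha
      rw [Set.indicator_apply]
      refine if_congr ?_ rfl rfl
      simp only [CylUV, Set.mem_setOf_eq]
      constructor
      · rintro ⟨-, x', hx', hux'⟩
        have hsplit : prepend (b :: w) x' = prepend [b] (prepend w x') := by
          rw [← prepend_append]; rfl
        rw [hsplit] at hx'
        obtain ⟨rfl, hxe⟩ := prepend_single_inj.1 hx'
        exact ⟨rfl, x', hxe, hux'⟩
      · rintro ⟨rfl, x', hxe, hux'⟩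
        refine ⟨(hmemS a).1 ha, x', ?_, hux'⟩
        rw [show prepend (a :: w) x' = prepend [a] (prepend w x') from by
          rw [← prepend_append]; rfl, ← hxe]
    rw [Finset.sum_congr rfl hstep]
    by_cases hPc : (∃ x' : ℕ → A, x = prepend w x' ∧ prepend u x' ∈ X)
    · simp only [hPc, and_true]
      rw [Finset.sum_ite_eq' S b (fun _ => (1 : ℂ))]
      have h2 : Set.indicator (CylUV X u w) (fun _ => (1 : ℂ)) x = 1 := by
        rw [Set.indicator_of_mem]; exact ⟨hx, hPc⟩
      rw [h2, mul_one]
      by_cases hb : b ∈ S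
      · rw [if_pos hb, Set.indicator_of_mem (mem_CylUV_nil.2 ⟨hx, (hmemS b).1 hb⟩)]
      · rw [if_neg hb, Set.indicator_of_notMem]
        intro hc
        exact hb ((hmemS b).2 (mem_CylUV_nil.1 hc).2)
    · simp only [hPc, and_false, if_false]
      rw [Finset.sum_const_zero]
      have h2 : Set.indicator (CylUV X u w) (fun _ => (1 : ℂ)) x = 0 := by
        rw [Set.indicator_of_notMem]
        intro hc
        exact hPc hc.2
      rw [h2, mul_zero]
  · rw [transferL_eq, ← hSdef, hNinv]
    congr 1
    have hstep : ∀ a ∈ S, Set.indicator (CylUV X u []) (fun _ => (1 : ℂ)) (prepend [a] x)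
        = if prepend (u ++ [a]) x ∈ X then 1 else 0 := by
      intro a ha
      rw [Set.indicator_apply]
      refine if_congr ?_ rfl rfl
      rw [mem_CylUV_nil, prepend_append]
      exact ⟨fun h => h.2, fun h => ⟨(hmemS a).1 ha, h⟩⟩
    rw [Finset.sum_congr rfl hstep]
    have hext : ∑ a ∈ S, (if prepend (u ++ [a]) x ∈ X then (1 : ℂ) else 0)
        = ∑ a : A, (if prepend (u ++ [a]) x ∈ X then (1 : ℂ) else 0) := by
      apply Finset.sum_subset (Finset.subset_univ S)
      intro a _ ha
      rw [if_neg]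
      intro hc
      exact ha ((hmemS a).2 (mem_of_prepend_mem hXinv u _ (by rwa [prepend_append] at hc)))
    rw [hext]
    apply Finset.sum_congr rfl
    intro a _
    rw [Set.indicator_apply]
    refine if_congr ?_ rfl rfl
    rw [mem_CylUV_nil]
    exact ⟨fun h => ⟨hx, h⟩, fun h => h.2⟩
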